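/- arXiv:2409.13963 — 2 statements merged into one kernel-verified Lean document; each statement's English description precedes it below -/
import Mathlib

section
/- Let G₁, G₂ : L²([0,1]^D) → L²([0,1]^D) be covariance (integral) operators with continuous kernels g₁, g₂ that are real analytic on [0,1]^{2D}, and let B₁, B₂ be covariance operators with continuous kernels b₁, b₂ that are δ₁- and δ₂-banded respectively, with all bandwidth components less than 1. If G₁ + B₁ = G₂ + B₂, then G₁ = G₂ and B₁ = B₂. -/
open MeasureTheory

/-- A continuous function on the unit cube that is a.e. zero (w.r.t. the restricted
volume) vanishes identically on the cube. -/
lemma zero_of_ae_zero_cube {D : ℕ}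
    {cube : Set (Fin D → ℝ)} (hcube : cube = Set.univ.pi fun _ : Fin D => Set.Icc (0:ℝ) 1)
    {f : (Fin D → ℝ) → ℝ} (hf : ContinuousOn f cube)
    (hae : ∀ᵐ x ∂(volume.restrict cube), f x = 0) :
    ∀ x ∈ cube, f x = 0 := by
  have hcl : IsClosed cube := by
    rw [hcube]; exact isClosed_set_pi fun i _ => isClosed_Icc
  have hmeas : MeasurableSet cube := hcl.measurableSet
  have hint : interior cube = Set.univ.pi fun _ : Fin D => Set.Ioo (0:ℝ) 1 := by
    rw [hcube, interior_pi_set Set.finite_univ]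
    simp [interior_Icc]
  -- step 1: f = 0 on interior cube
  have hzero_int : ∀ x ∈ interior cube, f x = 0 := by
    intro x hx
    by_contra hne
    have hcx : ContinuousAt f x :=
      hf.continuousAt (mem_interior_iff_mem_nhds.1 hx)
    have hV : {y | f y ≠ 0} ∈ nhds x := hcx.eventually_ne hne
    obtain ⟨V, hVsub, hVopen, hxV⟩ :=
      mem_nhds_iff.1 (Filter.inter_mem hV (isOpen_interior.mem_nhds hx))
    have hpos : 0 < volume V := hVopen.measure_pos volume ⟨x, hxV⟩
    have : volume.restrict cube {y | f y ≠ 0} = 0 := by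
      have := ae_iff.1 hae
      simpa using this
    have hVle : volume V ≤ volume.restrict cube {y | f y ≠ 0} := by
      rw [Measure.restrict_apply₀' (hmeas.nullMeasurableSet)]
      refine measure_mono fun y hy => ?_
      exact ⟨(hVsub hy).1, interior_subset (hVsub hy).2⟩
    rw [this] at hVle
    exact absurd (le_antisymm hVle zero_le) hpos.ne'
  -- step 2: extend to the closure
  intro x hx
  have hdense : x ∈ closure (interior cube) := by
    rw [hint, closure_pi_set]
    rw [hcube] at hx
    intro i hi
    simpa [closure_Ioo (by norm_num : (0:ℝ) ≠ 1)] using hx i hi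
  have h1 : Filter.Tendsto f (nhdsWithin x (interior cube)) (nhds (f x)) :=
    (hf x hx).mono_left (nhdsWithin_mono x interior_subset)
  have h2 : Filter.Tendsto f (nhdsWithin x (interior cube)) (nhds 0) := by
    refine Filter.Tendsto.congr' ?_ tendsto_const_nhds
    filter_upwards [self_mem_nhdsWithin] with y hy
    exact (hzero_int y hy).symm
  have : nhdsWithin x (interior cube) ≠ ⊥ :=
    mem_closure_iff_nhdsWithin_neBot.1 hdense |>.ne'
  exact tendsto_nhds_unique' ⟨this⟩ h1 h2

/-- identifiability of the decomposition of a covariance operator into an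
analytic-kernel (global) part plus a banded-kernel (local) part.  Operators on
L²([0,1]^D) with continuous kernels are determined by their kernels, so operator
equalities are expressed via the action of the integral operators on continuous test
functions, and the conclusions are the corresponding kernel equalities. -/
theorem stmt_3 (D : ℕ) (hD : 1 ≤ D)
    (cube : Set (Fin D → ℝ)) (hcube : cube = Set.univ.pi fun _ : Fin D => Set.Icc (0:ℝ) 1)
    (g₁ g₂ b₁ b₂ : (Fin D → ℝ) × (Fin D → ℝ) → ℝ)
    -- continuity of all kernels
    (hg₁c : ContinuousOn g₁ (cube ×ˢ cube)) (hg₂c : ContinuousOn g₂ (cube ×ˢ cube))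
    (hb₁c : ContinuousOn b₁ (cube ×ˢ cube)) (hb₂c : ContinuousOn b₂ (cube ×ˢ cube))
    -- covariance kernels: symmetric and positive semidefinite
    (hsym : ∀ k ∈ ({g₁, g₂, b₁, b₂} : Set ((Fin D → ℝ) × (Fin D → ℝ) → ℝ)),
      ∀ s₁ s₂, k (s₁, s₂) = k (s₂, s₁))
    (hpsd : ∀ k ∈ ({g₁, g₂, b₁, b₂} : Set ((Fin D → ℝ) × (Fin D → ℝ) → ℝ)),
      ∀ f : (Fin D → ℝ) → ℝ, ContinuousOn f cube →
        0 ≤ ∫ s₁ in cube, ∫ s₂ in cube, k (s₁, s₂) * f s₁ * f s₂)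
    -- the global kernels are real analytic on [0,1]^{2D}
    (hg₁a : AnalyticOnNhd ℝ g₁ (cube ×ˢ cube)) (hg₂a : AnalyticOnNhd ℝ g₂ (cube ×ˢ cube))
    -- the local kernels are δ-banded with bandwidth components in (0,1)
    (δ₁ δ₂ : Fin D → ℝ)
    (hδ₁ : ∀ d, 0 < δ₁ d ∧ δ₁ d < 1) (hδ₂ : ∀ d, 0 < δ₂ d ∧ δ₂ d < 1)
    (hb₁band : ∀ s₁ s₂ : Fin D → ℝ, (∃ d, δ₁ d ≤ |s₁ d - s₂ d|) → b₁ (s₁, s₂) = 0)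
    (hb₂band : ∀ s₁ s₂ : Fin D → ℝ, (∃ d, δ₂ d ≤ |s₁ d - s₂ d|) → b₂ (s₁, s₂) = 0)
    -- operator equality G₁ + B₁ = G₂ + B₂ (action on continuous test functions)
    (hop : ∀ f : (Fin D → ℝ) → ℝ, ContinuousOn f cube → ∀ s₁ ∈ cube,
      ∫ s₂ in cube, (g₁ (s₁, s₂) + b₁ (s₁, s₂)) * f s₂ =
        ∫ s₂ in cube, (g₂ (s₁, s₂) + b₂ (s₁, s₂)) * f s₂) :
    Set.EqOn g₁ g₂ (cube ×ˢ cube) ∧ Set.EqOn b₁ b₂ (cube ×ˢ cube) := by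
  clear hsym hpsd
  have hcl : IsClosed cube := by
    rw [hcube]; exact isClosed_set_pi fun i _ => isClosed_Icc
  have hcomp : IsCompact cube := by
    rw [hcube]; exact isCompact_univ_pi fun _ => isCompact_Icc
  have hmeas : MeasurableSet cube := hcl.measurableSet
  have hint : interior cube = Set.univ.pi fun _ : Fin D => Set.Ioo (0:ℝ) 1 := by
    rw [hcube, interior_pi_set Set.finite_univ]
    simp [interior_Icc]
  set h : (Fin D → ℝ) × (Fin D → ℝ) → ℝ := fun p => g₁ p + b₁ p - (g₂ p + b₂ p) with hh
  have hhc : ContinuousOn h (cube ×ˢ cube) := (hg₁c.add hb₁c).sub (hg₂c.add hb₂c)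
  -- step 1: kernel equality  g₁ + b₁ = g₂ + b₂  on cube × cube
  have hker : ∀ s₁ ∈ cube, ∀ s₂ ∈ cube, h (s₁, s₂) = 0 := by
    intro s₁ hs₁
    set f : (Fin D → ℝ) → ℝ := fun s₂ => h (s₁, s₂) with hf
    have hmap : Set.MapsTo (fun s₂ => ((s₁, s₂) : (Fin D → ℝ) × (Fin D → ℝ))) cube
        (cube ×ˢ cube) := fun s₂ hs₂ => ⟨hs₁, hs₂⟩
    have hcont2 : Continuous fun s₂ : Fin D → ℝ => ((s₁, s₂) : (Fin D → ℝ) × (Fin D → ℝ)) :=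
      continuous_const.prodMk continuous_id
    have hfc : ContinuousOn f cube := hhc.comp hcont2.continuousOn hmap
    have hk1c : ContinuousOn (fun s₂ => g₁ (s₁, s₂) + b₁ (s₁, s₂)) cube :=
      ((hg₁c.add hb₁c).comp hcont2.continuousOn hmap)
    have hk2c : ContinuousOn (fun s₂ => g₂ (s₁, s₂) + b₂ (s₁, s₂)) cube :=
      ((hg₂c.add hb₂c).comp hcont2.continuousOn hmap)
    have hint1 : IntegrableOn (fun s₂ => (g₁ (s₁, s₂) + b₁ (s₁, s₂)) * f s₂) cube :=
      (hk1c.mul hfc).integrableOn_compact hcomp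
    have hint2 : IntegrableOn (fun s₂ => (g₂ (s₁, s₂) + b₂ (s₁, s₂)) * f s₂) cube :=
      (hk2c.mul hfc).integrableOn_compact hcomp
    have hintf : IntegrableOn (fun s₂ => f s₂ * f s₂) cube :=
      (hfc.mul hfc).integrableOn_compact hcomp
    have h0 : ∫ s₂ in cube, f s₂ * f s₂ = 0 := by
      have heq := hop f hfc s₁ hs₁
      have hsub : ∫ s₂ in cube, ((g₁ (s₁, s₂) + b₁ (s₁, s₂)) * f s₂
          - (g₂ (s₁, s₂) + b₂ (s₁, s₂)) * f s₂) = 0 := by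
        rw [integral_sub hint1 hint2, heq, sub_self]
      have : (fun s₂ => (g₁ (s₁, s₂) + b₁ (s₁, s₂)) * f s₂
          - (g₂ (s₁, s₂) + b₂ (s₁, s₂)) * f s₂) = fun s₂ => f s₂ * f s₂ := by
        funext s₂
        simp only [hf, hh]
        ring
      rwa [this] at hsub
    have hae : ∀ᵐ x ∂(volume.restrict cube), f x * f x = 0 := by
      have := (integral_eq_zero_iff_of_nonneg (fun x => mul_self_nonneg (f x)) hintf).1 h0
      filter_upwards [this] with x hx using hx
    have hae' : ∀ᵐ x ∂(volume.restrict cube), f x = 0 := by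
      filter_upwards [hae] with x hx using mul_self_eq_zero.1 hx
    exact zero_of_ae_zero_cube hcube hfc hae'
  -- step 2: analytic continuation forces g₁ = g₂
  have d0 : Fin D := ⟨0, hD⟩
  set M : ℝ := max (δ₁ d0) (δ₂ d0) with hM
  have hM1 : M < 1 := max_lt (hδ₁ d0).2 (hδ₂ d0).2
  have hM0 : 0 < M := lt_max_of_lt_left (hδ₁ d0).1
  set t : ℝ := (1 - M) / 4 with ht
  have ht0 : 0 < t := by simp only [ht]; linarith
  have ht1 : t < 1 / 4 := by simp only [ht]; linarith
  set z₀ : (Fin D → ℝ) × (Fin D → ℝ) :=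
    (fun d => if d = d0 then 1 - t else 1 / 2, fun d => if d = d0 then t else 1 / 2) with hz₀
  set V : Set ((Fin D → ℝ) × (Fin D → ℝ)) :=
    {p | M < p.1 d0 - p.2 d0} ∩ (interior cube ×ˢ interior cube) with hV
  have hVopen : IsOpen V := by
    refine IsOpen.inter ?_ (isOpen_interior.prod isOpen_interior)
    exact isOpen_lt continuous_const
      (((continuous_apply d0).comp continuous_fst).sub
        ((continuous_apply d0).comp continuous_snd))
  have hz₀V : z₀ ∈ V := by
    refine ⟨?_, ?_, ?_⟩
    · show M < z₀.1 d0 - z₀.2 d0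
      have e1 : z₀.1 d0 = 1 - t := by simp [hz₀]
      have e2 : z₀.2 d0 = t := by simp [hz₀]
      rw [e1, e2]; simp only [ht]; linarith
    · rw [hint]; intro d _
      by_cases hd : d = d0
      · have e : z₀.1 d = 1 - t := by simp [hz₀, hd]
        rw [e, Set.mem_Ioo]; constructor <;> linarith
      · have e : z₀.1 d = 1 / 2 := by simp [hz₀, hd]
        rw [e, Set.mem_Ioo]; constructor <;> norm_num
    · rw [hint]; intro d _
      by_cases hd : d = d0
      · have e : z₀.2 d = t := by simp [hz₀, hd]
        rw [e, Set.mem_Ioo]; constructor <;> linarith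
      · have e : z₀.2 d = 1 / 2 := by simp [hz₀, hd]
        rw [e, Set.mem_Ioo]; constructor <;> norm_num
  have hVsub : V ⊆ cube ×ˢ cube := fun p hp =>
    ⟨interior_subset hp.2.1, interior_subset hp.2.2⟩
  have hVzero : ∀ p ∈ V, g₁ p - g₂ p = 0 := by
    intro p hp
    have hband : M < |p.1 d0 - p.2 d0| :=
      lt_of_lt_of_le hp.1 (le_abs_self _)
    have hb1 : b₁ p = 0 := by
      have := hb₁band p.1 p.2 ⟨d0, le_of_lt (lt_of_le_of_lt (le_max_left _ _) hband)⟩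
      simpa using this
    have hb2 : b₂ p = 0 := by
      have := hb₂band p.1 p.2 ⟨d0, le_of_lt (lt_of_le_of_lt (le_max_right _ _) hband)⟩
      simpa using this
    have hpc := hVsub hp
    have := hker p.1 hpc.1 p.2 hpc.2
    simp only [hh] at this
    have hpe : ((p.1, p.2) : (Fin D → ℝ) × (Fin D → ℝ)) = p := rfl
    rw [hpe] at this
    linarith
  have hEqNhds : (fun p => g₁ p - g₂ p) =ᶠ[nhds z₀] 0 := by
    filter_upwards [hVopen.mem_nhds hz₀V] with p hp
    exact hVzero p hp
  have hconv : Convex ℝ cube := by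
    rw [hcube]; exact convex_pi fun i _ => convex_Icc 0 1
  have hpre : IsPreconnected (cube ×ˢ cube) := (hconv.prod hconv).isPreconnected
  have hz₀mem : z₀ ∈ cube ×ˢ cube := hVsub hz₀V
  have hEqOn : Set.EqOn (fun p => g₁ p - g₂ p) 0 (cube ×ˢ cube) :=
    (hg₁a.sub hg₂a).eqOn_zero_of_preconnected_of_eventuallyEq_zero hpre hz₀mem hEqNhds
  have hg : Set.EqOn g₁ g₂ (cube ×ˢ cube) := by
    intro p hp
    have := hEqOn hp
    simpa [sub_eq_zero] using this
  refine ⟨hg, ?_⟩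
  intro p hp
  have hkp := hker p.1 hp.1 p.2 hp.2
  have hpe : ((p.1, p.2) : (Fin D → ℝ) × (Fin D → ℝ)) = p := rfl
  simp only [hh, hpe] at hkp
  have := hg hp
  linarith
end

section
/- Let C = G + B where G is an M × M symmetric positive semidefinite matrix of rank K all of whose K × K minors are nonzero, and B is an M × M matrix vanishing on the off-band index set Ω = {(i,j) : |i − j| > ⌈δM⌉} with δ < 1/4 and K ≤ ⌊M/4 − 1⌋. Then G is the unique solution of: minimize rank(θ) over M × M matrices θ subject to θ_{ij} = C_{ij} for all (i,j) with |i − j| > ⌈M/4⌉. -/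
open Matrix


open Function


lemma abs_helper (a b t : ℕ) (h : a + t < b ∨ b + t < a) :
    (t:ℤ) < |(a:ℤ) - (b:ℤ)| := by
  rcases h with h | h
  · calc (t:ℤ) < (b:ℤ) - a := by omega
    _ = -((a:ℤ) - b) := by ring
    _ ≤ |(a:ℤ) - b| := neg_le_abs _
  · calc (t:ℤ) < (a:ℤ) - b := by omega
    _ ≤ |(a:ℤ) - b| := le_abs_self _

lemma rank_submatrix_le' {M k : ℕ} (A : Matrix (Fin M) (Fin M) ℝ)
    (f g : Fin k → Fin M) : (A.submatrix f g).rank ≤ A.rank := by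
  have h1 : A * (1 : Matrix (Fin M) (Fin M) ℝ).submatrix (Equiv.refl (Fin M)) g
      = A.submatrix id g := by
    rw [Matrix.mul_submatrix_one]
    rfl
  have h2 : (1 : Matrix (Fin M) (Fin M) ℝ).submatrix f ⇑(Equiv.refl (Fin M)) * (A.submatrix id g)
      = A.submatrix f g := by
    rw [Matrix.one_submatrix_mul]
    rfl
  calc (A.submatrix f g).rank
      = ((1 : Matrix (Fin M) (Fin M) ℝ).submatrix f ⇑(Equiv.refl (Fin M)) * (A.submatrix id g)).rank := by rw [h2]
    _ ≤ (A.submatrix id g).rank := Matrix.rank_mul_le_right _ _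
    _ = (A * (1 : Matrix (Fin M) (Fin M) ℝ).submatrix (Equiv.refl (Fin M)) g).rank := by rw [h1]
    _ ≤ A.rank := Matrix.rank_mul_le_left _ _

lemma det_sub_corner {n : ℕ} (A B : Matrix (Fin (n+1)) (Fin (n+1)) ℝ)
    (h : ∀ r c, (r ≠ 0 ∨ c ≠ 0) → A r c = B r c) :
    A.det - B.det = (A 0 0 - B 0 0) * (A.submatrix Fin.succ Fin.succ).det := by
  have hsub : ∀ c : Fin (n+1),
      B.submatrix Fin.succ c.succAbove = A.submatrix Fin.succ c.succAbove := by
    intro c; ext r c'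
    exact (h _ _ (Or.inl (Fin.succ_ne_zero r))).symm
  rw [Matrix.det_succ_row_zero A, Matrix.det_succ_row_zero B, ← Finset.sum_sub_distrib]
  rw [Finset.sum_eq_single (0 : Fin (n+1))]
  · rw [hsub 0, Fin.succAbove_zero]
    simp only [Fin.val_zero, pow_zero]
    ring
  · intro c _ hc
    rw [hsub c, h 0 c (Or.inr hc)]
    ring
  · intro habs; exact absurd (Finset.mem_univ _) habs

lemma key_core {M K : ℕ} (G θ : Matrix (Fin M) (Fin M) ℝ)
    (hminors : ∀ f g : Fin K → Fin M, Injective f → Injective g →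
      (G.submatrix f g).det ≠ 0)
    (hG1 : ∀ f g : Fin (K+1) → Fin M, (G.submatrix f g).det = 0)
    (hθ1 : ∀ f g : Fin (K+1) → Fin M, (θ.submatrix f g).det = 0)
    (f g : Fin (K+1) → Fin M) (hfinj : Injective f) (hginj : Injective g)
    (hoff : ∀ r c : Fin (K+1), r ≠ 0 ∨ c ≠ 0 → θ (f r) (g c) = G (f r) (g c)) :
    θ (f 0) (g 0) = G (f 0) (g 0) := by
  set A := θ.submatrix f g with hA
  set B := G.submatrix f g with hB
  have hcor := det_sub_corner A B (fun r c hrc => hoff r c hrc)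
  rw [hθ1 f g, hG1 f g] at hcor
  have hsub : A.submatrix Fin.succ Fin.succ = G.submatrix (f ∘ Fin.succ) (g ∘ Fin.succ) := by
    ext r c
    exact hoff r.succ c.succ (Or.inl (Fin.succ_ne_zero r))
  have hne : (A.submatrix Fin.succ Fin.succ).det ≠ 0 := by
    rw [hsub]
    exact hminors _ _ (hfinj.comp (Fin.succ_injective _)) (hginj.comp (Fin.succ_injective _))
  have hz : (A 0 0 - B 0 0) * (A.submatrix Fin.succ Fin.succ).det = 0 := by
    rw [← hcor]; ring
  have h0 : A 0 0 - B 0 0 = 0 := by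
    rcases mul_eq_zero.mp hz with h | h
    · exact h
    · exact absurd h hne
  simpa [hA, hB, sub_eq_zero] using h0

lemma key0 {M K : ℕ} (t : ℕ) (hM : 2*t + 2*K + 1 ≤ M)
    (G θ : Matrix (Fin M) (Fin M) ℝ)
    (hminors : ∀ f g : Fin K → Fin M, Injective f → Injective g →
      (G.submatrix f g).det ≠ 0)
    (hG1 : ∀ f g : Fin (K+1) → Fin M, (G.submatrix f g).det = 0)
    (hθ1 : ∀ f g : Fin (K+1) → Fin M, (θ.submatrix f g).det = 0)
    (hagree : ∀ i j : Fin M, (t:ℤ) < |(i:ℤ) - (j:ℤ)| → θ i j = G i j)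
    (i j : Fin M) (hij : (j:ℕ) = (i:ℕ) + t) :
    θ i j = G i j := by
  have hiM := i.isLt
  have hjM := j.isLt
  rcases lt_or_ge (i:ℕ) K with hB | hi
  · -- Case B : i < K
    have key := key_core G θ hminors hG1 hθ1
      (fun r => ⟨if (r:ℕ) = 0 then (i:ℕ) else
          (if (r:ℕ) - 1 < (i:ℕ) then (r:ℕ) - 1 else M - K + ((r:ℕ) - 1)),
        by have := r.isLt; split_ifs <;> omega⟩)
      (fun c => ⟨if (c:ℕ) = 0 then (j:ℕ) else (j:ℕ) + (c:ℕ),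
        by have := c.isLt; split_ifs <;> omega⟩)
      (by intro a b hab
          have h := congrArg Fin.val hab
          simp only at h
          have := a.isLt; have := b.isLt
          apply Fin.ext
          split_ifs at h <;> omega)
      (by intro a b hab
          have h := congrArg Fin.val hab
          simp only at h
          have := a.isLt; have := b.isLt
          apply Fin.ext
          split_ifs at h <;> omega)
      (by intro r c hrc
          have hrc' : (r:ℕ) ≠ 0 ∨ (c:ℕ) ≠ 0 := by
            rcases hrc with h | h
            · exact Or.inl (fun hh => h (Fin.ext hh))
            · exact Or.inr (fun hh => h (Fin.ext hh))
          apply hagree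
          apply abs_helper
          simp only
          have := r.isLt; have := c.isLt
          split_ifs <;> omega)
    simp only [Fin.isValue, Fin.val_zero, if_pos rfl, ↓reduceIte] at key
    convert key using 2
  rcases le_or_gt ((j:ℕ) + K + 1) M with hA | hC
  · -- Case A : K ≤ i, j + K + 1 ≤ M
    have key := key_core G θ hminors hG1 hθ1
      (fun r => ⟨if (r:ℕ) = 0 then (i:ℕ) else (r:ℕ) - 1,
        by have := r.isLt; split_ifs <;> omega⟩)
      (fun c => ⟨if (c:ℕ) = 0 then (j:ℕ) else M - K + ((c:ℕ) - 1),
        by have := c.isLt; split_ifs <;> omega⟩)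
      (by intro a b hab
          have h := congrArg Fin.val hab
          simp only at h
          have := a.isLt; have := b.isLt
          apply Fin.ext
          split_ifs at h <;> omega)
      (by intro a b hab
          have h := congrArg Fin.val hab
          simp only at h
          have := a.isLt; have := b.isLt
          apply Fin.ext
          split_ifs at h <;> omega)
      (by intro r c hrc
          have hrc' : (r:ℕ) ≠ 0 ∨ (c:ℕ) ≠ 0 := by
            rcases hrc with h | h
            · exact Or.inl (fun hh => h (Fin.ext hh))
            · exact Or.inr (fun hh => h (Fin.ext hh))
          apply hagree
          apply abs_helper
          simp only
          have := r.isLt; have := c.isLt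
          split_ifs <;> omega)
    simp only [Fin.isValue, Fin.val_zero, if_pos rfl, ↓reduceIte] at key
    convert key using 2
  · -- Case C : K ≤ i, M < j + K + 1
    have key := key_core G θ hminors hG1 hθ1
      (fun r => ⟨if (r:ℕ) = 0 then (i:ℕ) else (i:ℕ) - K + ((r:ℕ) - 1),
        by have := r.isLt; split_ifs <;> omega⟩)
      (fun c => ⟨if (c:ℕ) = 0 then (j:ℕ) else
          (if (c:ℕ) ≤ M - 1 - (j:ℕ) then (j:ℕ) + (c:ℕ) else (c:ℕ) - 1 - (M - 1 - (j:ℕ))),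
        by have := c.isLt; split_ifs <;> omega⟩)
      (by intro a b hab
          have h := congrArg Fin.val hab
          simp only at h
          have := a.isLt; have := b.isLt
          apply Fin.ext
          split_ifs at h <;> omega)
      (by intro a b hab
          have h := congrArg Fin.val hab
          simp only at h
          have := a.isLt; have := b.isLt
          apply Fin.ext
          split_ifs at h <;> omega)
      (by intro r c hrc
          have hrc' : (r:ℕ) ≠ 0 ∨ (c:ℕ) ≠ 0 := by
            rcases hrc with h | h
            · exact Or.inl (fun hh => h (Fin.ext hh))
            · exact Or.inr (fun hh => h (Fin.ext hh))
          apply hagree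
          apply abs_helper
          simp only
          have := r.isLt; have := c.isLt
          split_ifs <;> omega)
    simp only [Fin.isValue, Fin.val_zero, if_pos rfl, ↓reduceIte] at key
    convert key using 2

lemma key1 {M K : ℕ} (t : ℕ) (hM : 2*t + 2*K + 1 ≤ M)
    (G θ : Matrix (Fin M) (Fin M) ℝ)
    (hminors : ∀ f g : Fin K → Fin M, Injective f → Injective g →
      (G.submatrix f g).det ≠ 0)
    (hG1 : ∀ f g : Fin (K+1) → Fin M, (G.submatrix f g).det = 0)
    (hθ1 : ∀ f g : Fin (K+1) → Fin M, (θ.submatrix f g).det = 0)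
    (hagree : ∀ i j : Fin M, (t:ℤ) < |(i:ℤ) - (j:ℤ)| → θ i j = G i j)
    (i j : Fin M) (hij : |(i:ℤ) - (j:ℤ)| = t) :
    θ i j = G i j := by
  rcases abs_cases ((i:ℤ) - (j:ℤ)) with ⟨h1, _⟩ | ⟨h1, _⟩
  · -- i ≥ j : i = j + t, use transpose
    have h : (i:ℤ) - (j:ℤ) = t := by rw [← h1, hij]
    have hminors' : ∀ f g : Fin K → Fin M, Injective f → Injective g →
        (Gᵀ.submatrix f g).det ≠ 0 := by
      intro f g hf hg
      rw [show Gᵀ.submatrix f g = (G.submatrix g f)ᵀ from rfl, Matrix.det_transpose]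
      exact hminors g f hg hf
    have hG1' : ∀ f g : Fin (K+1) → Fin M, (Gᵀ.submatrix f g).det = 0 := by
      intro f g
      rw [show Gᵀ.submatrix f g = (G.submatrix g f)ᵀ from rfl, Matrix.det_transpose]
      exact hG1 g f
    have hθ1' : ∀ f g : Fin (K+1) → Fin M, (θᵀ.submatrix f g).det = 0 := by
      intro f g
      rw [show θᵀ.submatrix f g = (θ.submatrix g f)ᵀ from rfl, Matrix.det_transpose]
      exact hθ1 g f
    have hagree' : ∀ a b : Fin M, (t:ℤ) < |(a:ℤ) - (b:ℤ)| → θᵀ a b = Gᵀ a b := by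
      intro a b hab
      have : θ b a = G b a := hagree b a (by rw [abs_sub_comm]; exact hab)
      simpa [Matrix.transpose_apply] using this
    have := key0 t hM Gᵀ θᵀ hminors' hG1' hθ1' hagree' j i (by omega)
    simpa [Matrix.transpose_apply] using this
  · -- j = i + t
    have h : (j:ℤ) - (i:ℤ) = t := by
      have : |(i:ℤ) - (j:ℤ)| = -((i:ℤ) - (j:ℤ)) := h1
      rw [hij] at this; omega
    exact key0 t hM G θ hminors hG1 hθ1 hagree i j (by omega)

lemma fill {M K b : ℕ} (hM : 2*b + 2*K + 1 ≤ M)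
    (G θ : Matrix (Fin M) (Fin M) ℝ)
    (hminors : ∀ f g : Fin K → Fin M, Injective f → Injective g →
      (G.submatrix f g).det ≠ 0)
    (hG1 : ∀ f g : Fin (K+1) → Fin M, (G.submatrix f g).det = 0)
    (hθ1 : ∀ f g : Fin (K+1) → Fin M, (θ.submatrix f g).det = 0)
    (hagree : ∀ i j : Fin M, (b:ℤ) < |(i:ℤ) - (j:ℤ)| → θ i j = G i j) :
    θ = G := by
  have main : ∀ s : ℕ, ∀ i j : Fin M, (b:ℤ) < |(i:ℤ) - (j:ℤ)| + s → θ i j = G i j := by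
    intro s
    induction s with
    | zero => simpa using hagree
    | succ s ih =>
      intro i j h
      by_cases hc : (b:ℤ) < |(i:ℤ) - (j:ℤ)| + s
      · exact ih i j hc
      · have habs0 : (0:ℤ) ≤ |(i:ℤ) - (j:ℤ)| := abs_nonneg _
        have hsb : s ≤ b := by omega
        have habs : |(i:ℤ) - (j:ℤ)| = ((b - s : ℕ) : ℤ) := by
          push_cast; omega
        refine key1 (b - s) (by omega) G θ hminors hG1 hθ1 ?_ i j habs
        intro a c hac
        apply ih
        have : ((b - s : ℕ) : ℤ) = (b:ℤ) - s := by push_cast; omega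
        omega
  ext i j
  have habs0 : (0:ℤ) ≤ |(i:ℤ) - (j:ℤ)| := abs_nonneg _
  exact main (b+1) i j (by push_cast; omega)


/-- Let C = G + B with G symmetric PSD of rank K, all of whose K × K
minors are nonzero, and B vanishing off the band |i − j| > ⌈δM⌉, where δ < 1/4 and
K ≤ ⌊M/4 − 1⌋.  Then G is the unique solution of the rank-minimization problem:
minimize rank(θ) subject to θ agreeing with C off the band |i − j| > ⌈M/4⌉. -/
theorem stmt_11 (M K : ℕ) (δ : ℝ) (hδ0 : 0 ≤ δ) (hδ : δ < 1 / 4)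
    (hK : (K : ℝ) ≤ ⌊(M : ℝ) / 4 - 1⌋)
    (G B C : Matrix (Fin M) (Fin M) ℝ) (hC : C = G + B)
    (hGpsd : G.PosSemidef) (hGrank : G.rank = K)
    (hminors : ∀ f g : Fin K → Fin M, Function.Injective f → Function.Injective g →
      (G.submatrix f g).det ≠ 0)
    (hBband : ∀ i j : Fin M, (⌈δ * (M : ℝ)⌉ : ℤ) < |(i : ℤ) - (j : ℤ)| → B i j = 0) :
    (∀ i j : Fin M, (⌈(M : ℝ) / 4⌉ : ℤ) < |(i : ℤ) - (j : ℤ)| → G i j = C i j) ∧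
    (∀ θ : Matrix (Fin M) (Fin M) ℝ,
      (∀ i j : Fin M, (⌈(M : ℝ) / 4⌉ : ℤ) < |(i : ℤ) - (j : ℤ)| → θ i j = C i j) →
        K ≤ θ.rank ∧ (θ.rank = K → θ = G)) := by
  have hM0 : (0:ℝ) ≤ (M:ℝ) := Nat.cast_nonneg M
  have hM4 : 4 * K + 4 ≤ M := by
    have h1 : (K:ℝ) ≤ (M:ℝ)/4 - 1 := le_trans hK (Int.floor_le _)
    have h2 : 4*(K:ℝ) + 4 ≤ (M:ℝ) := by linarith
    exact_mod_cast h2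
  have hbz0 : (0:ℤ) ≤ ⌈(M:ℝ)/4⌉ := Int.ceil_nonneg (by positivity)
  set b : ℕ := (⌈(M:ℝ)/4⌉ : ℤ).toNat with hb
  have hbcast : (b:ℤ) = ⌈(M:ℝ)/4⌉ := Int.toNat_of_nonneg hbz0
  have hb4 : 4 * ⌈(M:ℝ)/4⌉ ≤ (M:ℤ) + 3 := by
    have h1 : ((⌈(M:ℝ)/4⌉ : ℤ) : ℝ) < (M:ℝ)/4 + 1 := Int.ceil_lt_add_one _
    have h2 : ((4 * ⌈(M:ℝ)/4⌉ : ℤ) : ℝ) < (M:ℝ) + 4 := by push_cast; linarith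
    have h3 : (4 * ⌈(M:ℝ)/4⌉ : ℤ) < (M:ℤ) + 4 := by exact_mod_cast h2
    omega
  have hMb : 2*b + 2*K + 1 ≤ M := by omega
  have hGC : ∀ i j : Fin M, (⌈(M : ℝ) / 4⌉ : ℤ) < |(i : ℤ) - (j : ℤ)| → G i j = C i j := by
    intro i j hij
    have hδM : ⌈δ * (M:ℝ)⌉ ≤ ⌈(M:ℝ)/4⌉ := Int.ceil_le_ceil (by nlinarith)
    have hB0 : B i j = 0 := hBband i j (lt_of_le_of_lt hδM hij)
    rw [hC]
    simp [Matrix.add_apply, hB0]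
  refine ⟨hGC, ?_⟩
  intro θ hθC
  have hagree : ∀ i j : Fin M, (b:ℤ) < |(i:ℤ) - (j:ℤ)| → θ i j = G i j := by
    intro i j hij
    have h2 : (⌈(M:ℝ)/4⌉ : ℤ) < |(i:ℤ) - (j:ℤ)| := by omega
    rw [hθC i j h2, ← hGC i j h2]
  constructor
  · -- K ≤ θ.rank
    have hf : ∀ a : Fin K, (a:ℕ) < M := fun a => by have := a.isLt; omega
    have hg : ∀ a : Fin K, M - K + (a:ℕ) < M := fun a => by have := a.isLt; omega
    set f : Fin K → Fin M := fun a => ⟨(a:ℕ), hf a⟩ with hfdef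
    set g : Fin K → Fin M := fun a => ⟨M - K + (a:ℕ), hg a⟩ with hgdef
    have hfinj : Function.Injective f := by
      intro a b hab
      have := congrArg Fin.val hab
      simp only [hfdef] at this
      exact Fin.ext this
    have hginj : Function.Injective g := by
      intro a b hab
      have := congrArg Fin.val hab
      simp only [hgdef] at this
      have := a.isLt; have := b.isLt
      apply Fin.ext; omega
    have hsame : θ.submatrix f g = G.submatrix f g := by
      ext r c
      apply hagree
      apply abs_helper
      have := r.isLt; have := c.isLt
      simp only [hfdef, hgdef]
      omega
    have hdet : (θ.submatrix f g).det ≠ 0 := by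
      rw [hsame]; exact hminors f g hfinj hginj
    have hrk : (θ.submatrix f g).rank = K := by
      rw [Matrix.rank_of_isUnit _ ((Matrix.isUnit_iff_isUnit_det _).mpr
        (isUnit_iff_ne_zero.mpr hdet)), Fintype.card_fin]
    calc K = (θ.submatrix f g).rank := hrk.symm
      _ ≤ θ.rank := rank_submatrix_le' θ f g
  · intro hrank
    have hθ1 : ∀ f g : Fin (K+1) → Fin M, (θ.submatrix f g).det = 0 := by
      intro f g
      by_contra hne
      have h1 : (θ.submatrix f g).rank = K+1 := by
        rw [Matrix.rank_of_isUnit _ ((Matrix.isUnit_iff_isUnit_det _).mpr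
          (isUnit_iff_ne_zero.mpr hne)), Fintype.card_fin]
      have h2 := rank_submatrix_le' θ f g
      rw [h1, hrank] at h2
      omega
    have hG1 : ∀ f g : Fin (K+1) → Fin M, (G.submatrix f g).det = 0 := by
      intro f g
      by_contra hne
      have h1 : (G.submatrix f g).rank = K+1 := by
        rw [Matrix.rank_of_isUnit _ ((Matrix.isUnit_iff_isUnit_det _).mpr
          (isUnit_iff_ne_zero.mpr hne)), Fintype.card_fin]
      have h2 := rank_submatrix_le' G f g
      rw [h1, hGrank] at h2
      omega
    exact fill hMb G θ hminors hG1 hθ1 hagree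
end
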